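/- Let n be a natural number, let J be an n×n real skew-symmetric matrix (Jᵀ = −J), let c ∈ ℝ, and let Q = (1 − c • J)⁻¹ * (1 + c • J). Then every complex eigenvalue of Q has modulus one: every root λ ∈ ℂ of the characteristic polynomial of the complexification Q.map Complex.ofReal satisfies Complex.abs λ = 1. -/

import Mathlib

open Matrix Polynomial

open scoped Matrix.Norms.L2Operator in
lemma aux_spectrum_unit_modulus {n : ℕ} (M : Matrix (Fin n) (Fin n) ℂ)
    (h1 : Mᴴ * M = 1) (h2 : M * Mᴴ = 1) (lam : ℂ) (hlam : lam ∈ spectrum ℂ M) :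
    ‖lam‖ = 1 := by
  have hu : M ∈ unitary (Matrix (Fin n) (Fin n) ℂ) := by
    rw [Unitary.mem_iff]
    exact ⟨h1, h2⟩
  have := spectrum.subset_circle_of_unitary hu hlam
  simpa using this

lemma aux_eval_charpoly {n : ℕ} {R : Type*} [CommRing R] (M : Matrix (Fin n) (Fin n) R)
    (t : R) : M.charpoly.eval t = (t • (1 : Matrix (Fin n) (Fin n) R) - M).det := by
  rw [Matrix.charpoly, ← Polynomial.coe_evalRingHom, RingHom.map_det]
  congr 1
  ext i j
  by_cases h : i = j
  · subst h
    simp [Matrix.charmatrix_apply_eq, Matrix.one_apply]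
  · simp [Matrix.charmatrix_apply_ne _ _ _ h, Matrix.one_apply, h]

/-- **Appendix B of the paper.** Every complex eigenvalue of the Cayley transform
`Q = (1 - c • J)⁻¹ (1 + c • J)` of a multiple of a skew-symmetric real matrix has
modulus one: every root of the characteristic polynomial of the complexification of `Q`
lies on the unit circle. -/
theorem cayley_transform_eigenvalues_unit_modulus
    (n : ℕ) (J : Matrix (Fin n) (Fin n) ℝ) (hJ : Jᵀ = -J) (c : ℝ)
    (Q : Matrix (Fin n) (Fin n) ℝ) (hQ : Q = (1 - c • J)⁻¹ * (1 + c • J))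
    (lam : ℂ) (hlam : ((Q.map Complex.ofReal).charpoly).IsRoot lam) :
    ‖lam‖ = 1 := by
  set K : Matrix (Fin n) (Fin n) ℝ := c • J with hK
  have hKT : Kᵀ = -K := by
    rw [hK, Matrix.transpose_smul, hJ, smul_neg]
  set A : Matrix (Fin n) (Fin n) ℝ := 1 - K with hA
  set B : Matrix (Fin n) (Fin n) ℝ := 1 + K with hB
  -- B * A = 1 + Kᵀ * K, which is positive definite
  have hBA : B * A = 1 + Kᵀ * K := by
    rw [hA, hB, hKT]
    noncomm_ring
  have hKH : Kᴴ = Kᵀ := by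
    ext i j
    simp [Matrix.conjTranspose_apply, Matrix.transpose_apply]
  have hposBA : (B * A).PosDef := by
    rw [hBA, ← hKH]
    exact Matrix.PosDef.add_posSemidef Matrix.PosDef.one
      (Matrix.posSemidef_conjTranspose_mul_self K)
  have hunitBA : IsUnit (B * A) := hposBA.isUnit
  have hdetBA : IsUnit (B * A).det := (Matrix.isUnit_iff_isUnit_det _).mp hunitBA
  rw [Matrix.det_mul] at hdetBA
  have hdetA : IsUnit A.det := isUnit_of_mul_isUnit_right hdetBA
  have hdetB : IsUnit B.det := isUnit_of_mul_isUnit_left hdetBA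
  -- A and B commute
  have hcomm : A * B = B * A := by
    rw [hA, hB]; noncomm_ring
  -- transposes
  have hAT : Aᵀ = B := by
    rw [hA, hB, Matrix.transpose_sub, Matrix.transpose_one, hKT, sub_neg_eq_add]
  have hBT : Bᵀ = A := by
    rw [hB, hA, Matrix.transpose_add, Matrix.transpose_one, hKT, ← sub_eq_add_neg]
  -- Q is orthogonal
  have hQTQ : Qᵀ * Q = 1 := by
    rw [hQ, Matrix.transpose_mul, Matrix.transpose_nonsing_inv, hAT, hBT]
    have hinv : B⁻¹ * A⁻¹ = A⁻¹ * B⁻¹ := by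
      rw [← Matrix.mul_inv_rev, ← Matrix.mul_inv_rev, hcomm]
    calc A * B⁻¹ * (A⁻¹ * B) = A * (B⁻¹ * A⁻¹) * B := by noncomm_ring
      _ = A * (A⁻¹ * B⁻¹) * B := by rw [hinv]
      _ = (A * A⁻¹) * (B⁻¹ * B) := by noncomm_ring
      _ = 1 := by rw [Matrix.mul_nonsing_inv A hdetA, Matrix.nonsing_inv_mul B hdetB, one_mul]
  have hQQT : Q * Qᵀ = 1 := mul_eq_one_comm.mp hQTQ
  -- complexification
  set Q' : Matrix (Fin n) (Fin n) ℂ := Q.map Complex.ofReal with hQ'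
  have hQ'H : Q'ᴴ = Qᵀ.map Complex.ofReal := by
    ext i j
    simp [hQ', Matrix.conjTranspose_apply, Matrix.map_apply, Matrix.transpose_apply,
      Complex.conj_ofReal]
  have hmapmul : ∀ (X Y : Matrix (Fin n) (Fin n) ℝ),
      (X * Y).map Complex.ofReal = X.map Complex.ofReal * Y.map Complex.ofReal := by
    intro X Y
    exact Matrix.map_mul (f := Complex.ofRealHom)
  have hone : ((1 : Matrix (Fin n) (Fin n) ℝ).map Complex.ofReal) = 1 :=
    Matrix.map_one _ Complex.ofReal_zero Complex.ofReal_one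
  have h1 : Q'ᴴ * Q' = 1 := by rw [hQ'H, hQ', ← hmapmul, hQTQ, hone]
  have h2 : Q' * Q'ᴴ = 1 := by rw [hQ'H, hQ', ← hmapmul, hQQT, hone]
  -- lam is in the spectrum
  have hdet0 : (lam • (1 : Matrix (Fin n) (Fin n) ℂ) - Q').det = 0 := by
    rw [← aux_eval_charpoly]
    exact hlam
  have hspec : lam ∈ spectrum ℂ Q' := by
    rw [spectrum.mem_iff]
    intro hu
    have := (Matrix.isUnit_iff_isUnit_det _).mp (by
      rwa [Algebra.algebraMap_eq_smul_one] at hu)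
    rw [hdet0] at this
    exact (this.ne_zero rfl)
  exact aux_spectrum_unit_modulus Q' h1 h2 lam hspec
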